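/- arXiv:1106.6077 — 2 statements merged into one kernel-verified Lean document; each statement's English description precedes it below -/
import Mathlib

section
/- Let S be a good semigroup in ℤ₊^r. If n̲ ∈ ℤ₊^r is a gap of S (i.e. n̲ ∉ S), then there exists an index i ∈ {1,…,r} such that Δ_i^r(n̲) = ∅, where Δ_i^r(n̲) = {β̲ ∈ S : β_i = n_i, and β_d ≥ n_d for all d ≠ i}. -/
open Finset

/-- Δ_J(n) : elements of S agreeing with n on J and strictly larger off J. -/
def Delta {r : ℕ} (S : Set (Fin r → ℕ)) (J : Finset (Fin r)) (n : Fin r → ℕ) :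
    Set (Fin r → ℕ) :=
  {β | β ∈ S ∧ (∀ i ∈ J, β i = n i) ∧ ∀ t ∉ J, n t < β t}

/-- The pivotage property (S4). -/
def Pivotage {r : ℕ} (S : Set (Fin r → ℕ)) : Prop :=
  ∀ n ∈ S, ∀ m ∈ S, ∀ i₀ : Fin r, n i₀ = m i₀ →
    ∃ β ∈ S, (∀ k, min (n k) (m k) ≤ β k) ∧
      (∀ t, n t ≠ m t → β t = min (n t) (m t)) ∧ n i₀ < β i₀

/-- A good semigroup of ℤ₊^r. -/
def GoodSemigroup {r : ℕ} (S : Set (Fin r → ℕ)) : Prop :=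
  (0 : Fin r → ℕ) ∈ S ∧
  (∀ n ∈ S, ∀ m ∈ S, n + m ∈ S) ∧
  (∀ n ∈ S, ∀ m ∈ S, (fun i => min (n i) (m i)) ∈ S) ∧
  (∃ δ : Fin r → ℕ, ∀ n : Fin r → ℕ, (∀ i, δ i ≤ n i) → n ∈ S) ∧
  Pivotage S

/-- A maximal point of S. -/
def IsMaximalPoint {r : ℕ} (S : Set (Fin r → ℕ)) (n : Fin r → ℕ) : Prop :=
  n ∈ S ∧ ∀ i : Fin r, Delta S {i} n = ∅

/-- Dimension function of S. -/
def IsDimFun {r : ℕ} (S : Set (Fin r → ℕ)) (ℓ : (Fin r → ℕ) → ℕ) : Prop :=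
  ℓ 0 = 0 ∧
  ∀ (n : Fin r → ℕ) (i : Fin r),
    ((∃ β ∈ S, β i = n i ∧ ∀ j, j ≠ i → n j ≤ β j) →
       ℓ (n + Pi.single i 1) = ℓ n + 1) ∧
    ((¬ ∃ β ∈ S, β i = n i ∧ ∀ j, j ≠ i → n j ≤ β j) →
       ℓ (n + Pi.single i 1) = ℓ n)

/-- e_J, characteristic vector of J. -/
def eJ {r : ℕ} (J : Finset (Fin r)) : Fin r → ℕ := fun i => if i ∈ J then 1 else 0

/-- number of maximal points with all coordinates strictly below n. -/
noncomputable def mCount {r : ℕ} (S : Set (Fin r → ℕ)) (n : Fin r → ℕ) : ℕ :=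
  Set.ncard {γ | IsMaximalPoint S γ ∧ ∀ i, γ i < n i}

/-- A maximal point of kind x₂,…,x_{r−1}. -/
def OfKind {r : ℕ} (S : Set (Fin r → ℕ)) (n : Fin r → ℕ) (x : ℕ → ℕ) : Prop :=
  IsMaximalPoint S n ∧ ∀ j, 2 ≤ j → j ≤ r - 1 →
    ((x j = 0 ∧ ∀ J : Finset (Fin r), J ≠ univ → J.card = j → Delta S J n = ∅) ∨
     (x j = 1 ∧ ∀ J : Finset (Fin r), J ≠ univ → J.card = j → (Delta S J n).Nonempty))

/-- The Stöhr zeta coefficient ε_n. -/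
noncomputable def eps {r : ℕ} (q : ℕ) (ℓ : (Fin r → ℕ) → ℕ) (n : Fin r → ℕ) : ℚ :=
  ((q : ℚ) / ((q : ℚ) - 1)) * ∑ J : Finset (Fin r),
    (-1 : ℚ) ^ J.card * (q : ℚ) ^ ((∑ i, (n i : ℤ)) - (ℓ (n + eJ J) : ℤ))

/-- number of gaps of the i-th projection S_i below k. -/
noncomputable def gapsBelow {r : ℕ} (S : Set (Fin r → ℕ)) (i : Fin r) (k : ℕ) : ℕ :=
  Set.ncard {m | m < k ∧ m ∉ (fun β : Fin r → ℕ => β i) '' S}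

/-- If n is a gap of a good semigroup S, then Δ_i^r(n) = ∅ for some i, i.e. there is
no β ∈ S with β_i = n_i and β_d ≥ n_d for all d ≠ i. -/
theorem gap_exists_delta_r_empty {r : ℕ} (S : Set (Fin r → ℕ)) (hS : GoodSemigroup S)
    (n : Fin r → ℕ) (hn : n ∉ S) :
    ∃ i : Fin r, ¬ ∃ β ∈ S, β i = n i ∧ ∀ d, d ≠ i → n d ≤ β d := by
  obtain ⟨h0, -, hmin, -, -⟩ := hS
  by_contra h
  push_neg at h
  choose β hβS hβeq hβge using h
  rcases Nat.eq_zero_or_pos r with hr | hr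
  · apply hn
    have : n = 0 := funext fun i => absurd (i.2) (by omega)
    rw [this]; exact h0
  · have key : ∀ (T : Finset (Fin r)) (hT : T.Nonempty),
        (fun k => T.inf' hT (fun i => β i k)) ∈ S := by
      intro T hT
      induction hT using Finset.Nonempty.cons_induction with
      | singleton a => simpa using hβS a
      | cons a T ha hT ih =>
          have := hmin _ (hβS a) _ ih
          convert this using 2 with k
          exact Finset.inf'_cons hT (f := fun x => β x k)
    apply hn
    have hne : (Finset.univ : Finset (Fin r)).Nonempty :=
      ⟨⟨0, hr⟩, Finset.mem_univ _⟩
    have heq : n = fun k => Finset.univ.inf' hne (fun i => β i k) := by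
      funext k
      refine le_antisymm ?_ ?_
      · apply Finset.le_inf'
        intro i _
        rcases eq_or_ne i k with rfl | hik
        · exact (hβeq i).ge
        · exact hβge i k (Ne.symm hik)
      · exact (Finset.inf'_le _ (Finset.mem_univ k)).trans (hβeq k).le
    rw [heq]
    exact key _ hne
end

section
/- Let S be a good semigroup in ℤ₊² (r = 2 branches) with dimension function ℓ, q ≥ 2, and ε_{(n₁,n₂)} = (q/(q−1))·Σ_{J⊆{1,2}} (−1)^{#J} q^{n₁+n₂−ℓ((n₁,n₂)+e_J)}. Let M be the set of maximal points of S, s_i(n_i) the number of gaps of S_i below n_i, and m(n₁,n₂) the number of maximal points with both coordinates strictly below (n₁,n₂). Then: if (n₁,n₂) ∈ M, ε_{(n₁,n₂)} = q^{s₁(n₁)+s₂(n₂)+m(n₁,n₂)}; if (n₁,n₂) ∈ S \ M, ε_{(n₁,n₂)} = q^{s₁(n₁)+s₂(n₂)+m(n₁,n₂)}·(q−1)/q. -/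
open Finset

namespace EpsAux

def pt (a b : ℕ) : Fin 2 → ℕ := ![a, b]

lemma pt0 (a b : ℕ) : pt a b 0 = a := rfl
lemma pt1 (a b : ℕ) : pt a b 1 = b := rfl

lemma pt_zero : pt 0 0 = (0 : Fin 2 → ℕ) := by
  funext i; fin_cases i <;> rfl

lemma pt_step0 (a b : ℕ) : pt a b + Pi.single 0 1 = pt (a+1) b := by
  funext i; fin_cases i <;> simp [pt, Pi.single_apply]

lemma pt_step1 (a b : ℕ) : pt a b + Pi.single 1 1 = pt a (b+1) := by
  funext i; fin_cases i <;> simp [pt, Pi.single_apply]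

lemma eq_pt (n : Fin 2 → ℕ) : n = pt (n 0) (n 1) := by
  funext i; fin_cases i <;> rfl

lemma ncard_step_pos (P : ℕ → Prop) (k : ℕ) (h : P k) :
    Set.ncard {m | m < k + 1 ∧ P m} = Set.ncard {m | m < k ∧ P m} + 1 := by
  have hfin : {m | m < k ∧ P m}.Finite :=
    (Set.finite_Iio k).subset (fun m hm => hm.1)
  have hset : {m | m < k + 1 ∧ P m} = insert k {m | m < k ∧ P m} := by
    ext m
    simp only [Set.mem_setOf_eq, Set.mem_insert_iff]
    constructor
    · rintro ⟨hm, hp⟩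
      rcases Nat.lt_succ_iff_lt_or_eq.mp hm with h' | rfl
      · exact Or.inr ⟨h', hp⟩
      · exact Or.inl rfl
    · rintro (rfl | ⟨hm, hp⟩)
      · exact ⟨Nat.lt_succ_self _, h⟩
      · exact ⟨Nat.lt_succ_of_lt hm, hp⟩
  rw [hset, Set.ncard_insert_of_notMem (by simp) hfin]

lemma ncard_step_neg (P : ℕ → Prop) (k : ℕ) (h : ¬ P k) :
    Set.ncard {m | m < k + 1 ∧ P m} = Set.ncard {m | m < k ∧ P m} := by
  have hset : {m | m < k + 1 ∧ P m} = {m | m < k ∧ P m} := by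
    ext m
    simp only [Set.mem_setOf_eq]
    constructor
    · rintro ⟨hm, hp⟩
      rcases Nat.lt_succ_iff_lt_or_eq.mp hm with h' | rfl
      · exact ⟨h', hp⟩
      · exact absurd hp h
    · rintro ⟨hm, hp⟩; exact ⟨Nat.lt_succ_of_lt hm, hp⟩
  rw [hset]


lemma gaps_step_mem (S : Set (Fin 2 → ℕ)) (i : Fin 2) (k : ℕ)
    (h : k ∈ (fun β : Fin 2 → ℕ => β i) '' S) :
    gapsBelow S i (k + 1) = gapsBelow S i k :=
  ncard_step_neg (fun m => m ∉ (fun β : Fin 2 → ℕ => β i) '' S) k (not_not_intro h)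

lemma gaps_step_notmem (S : Set (Fin 2 → ℕ)) (i : Fin 2) (k : ℕ)
    (h : k ∉ (fun β : Fin 2 → ℕ => β i) '' S) :
    gapsBelow S i (k + 1) = gapsBelow S i k + 1 :=
  ncard_step_pos (fun m => m ∉ (fun β : Fin 2 → ℕ => β i) '' S) k h

lemma bad_step_pos (S : Set (Fin 2 → ℕ)) (a b : ℕ)
    (h : ∀ β ∈ S, β 1 = b → β 0 < a) :
    Set.ncard {m | m < b + 1 ∧ ∀ β ∈ S, β 1 = m → β 0 < a} =
      Set.ncard {m | m < b ∧ ∀ β ∈ S, β 1 = m → β 0 < a} + 1 :=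
  ncard_step_pos (fun m => ∀ β ∈ S, β 1 = m → β 0 < a) b h

lemma bad_step_neg (S : Set (Fin 2 → ℕ)) (a b : ℕ)
    (h : ¬ ∀ β ∈ S, β 1 = b → β 0 < a) :
    Set.ncard {m | m < b + 1 ∧ ∀ β ∈ S, β 1 = m → β 0 < a} =
      Set.ncard {m | m < b ∧ ∀ β ∈ S, β 1 = m → β 0 < a} :=
  ncard_step_neg (fun m => ∀ β ∈ S, β 1 = m → β 0 < a) b h

lemma mem_Delta1 (S : Set (Fin 2 → ℕ)) (γ β : Fin 2 → ℕ) (hβ : β ∈ S)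
    (h1 : β 1 = γ 1) (h0 : γ 0 < β 0) : β ∈ Delta S {1} γ := by
  refine ⟨hβ, ?_, ?_⟩
  · intro i hi
    fin_cases i
    · exact absurd hi (by decide)
    · exact h1
  · intro t ht
    fin_cases t
    · exact h0
    · exact absurd (by decide) ht

lemma maximal_bound1 {S : Set (Fin 2 → ℕ)} {γ : Fin 2 → ℕ}
    (hγ : IsMaximalPoint S γ) (β : Fin 2 → ℕ) (hβ : β ∈ S) (h1 : β 1 = γ 1) :
    β 0 ≤ γ 0 := by
  by_contra hc
  have hmem := mem_Delta1 S γ β hβ h1 (not_le.mp hc)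
  rw [hγ.2 1] at hmem
  exact hmem


lemma leg0 (S : Set (Fin 2 → ℕ)) (ℓ : (Fin 2 → ℕ) → ℕ) (hℓ : IsDimFun S ℓ) :
    ∀ a, ℓ (pt a 0) + gapsBelow S 0 a = a := by
  intro a
  induction a with
  | zero =>
    rw [pt_zero, hℓ.1]
    have : {m | m < 0 ∧ m ∉ (fun β : Fin 2 → ℕ => β 0) '' S} = ∅ := by
      ext m; simp
    simp [gapsBelow, this]
  | succ a ih =>
    have hstep := hℓ.2 (pt a 0) 0
    by_cases h : a ∈ (fun β : Fin 2 → ℕ => β 0) '' S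
    · obtain ⟨β, hβS, hβ0⟩ := h
      have hcond : ∃ β ∈ S, β 0 = (pt a 0) 0 ∧ ∀ j, j ≠ 0 → (pt a 0) j ≤ β j := by
        refine ⟨β, hβS, hβ0, ?_⟩
        intro j hj
        fin_cases j
        · exact absurd rfl hj
        · exact Nat.zero_le _
      have heq := hstep.1 hcond
      rw [pt_step0] at heq
      rw [gaps_step_mem S 0 a ⟨β, hβS, hβ0⟩, heq]
      linarith
    · have hcond : ¬ ∃ β ∈ S, β 0 = (pt a 0) 0 ∧ ∀ j, j ≠ 0 → (pt a 0) j ≤ β j := by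
        rintro ⟨β, hβS, hβ0, -⟩
        exact h ⟨β, hβS, hβ0⟩
      have heq := hstep.2 hcond
      rw [pt_step0] at heq
      rw [gaps_step_notmem S 0 a h, heq]
      linarith

lemma leg1 (S : Set (Fin 2 → ℕ)) (ℓ : (Fin 2 → ℕ) → ℕ) (hℓ : IsDimFun S ℓ) (a : ℕ) :
    ∀ b, ℓ (pt a b) + Set.ncard {m | m < b ∧ ∀ β ∈ S, β 1 = m → β 0 < a}
      = ℓ (pt a 0) + b := by
  intro b
  induction b with
  | zero =>
    have : {m | m < 0 ∧ ∀ β ∈ S, β 1 = m → β 0 < a} = ∅ := by ext m; simp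
    simp [this]
  | succ b ih =>
    have hstep := hℓ.2 (pt a b) 1
    by_cases h : ∃ β ∈ S, β 1 = b ∧ a ≤ β 0
    · obtain ⟨β, hβS, hβ1, hβ0⟩ := h
      have hcond : ∃ β ∈ S, β 1 = (pt a b) 1 ∧ ∀ j, j ≠ 1 → (pt a b) j ≤ β j := by
        refine ⟨β, hβS, hβ1, ?_⟩
        intro j hj
        fin_cases j
        · exact hβ0
        · exact absurd rfl hj
      have heq := hstep.1 hcond
      rw [pt_step1] at heq
      have hP : ¬ ∀ β' ∈ S, β' 1 = b → β' 0 < a :=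
        fun hall => absurd (hall β hβS hβ1) (not_lt.mpr hβ0)
      rw [bad_step_neg S a b hP, heq]
      linarith
    · have hcond : ¬ ∃ β ∈ S, β 1 = (pt a b) 1 ∧ ∀ j, j ≠ 1 → (pt a b) j ≤ β j := by
        rintro ⟨β, hβS, hβ1, hall⟩
        exact h ⟨β, hβS, hβ1, hall 0 (by decide)⟩
      have heq := hstep.2 hcond
      rw [pt_step1] at heq
      have hP : ∀ β ∈ S, β 1 = b → β 0 < a := by
        intro β hβS hβ1
        by_contra hc
        exact h ⟨β, hβS, hβ1, not_lt.mp hc⟩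
      rw [bad_step_pos S a b hP, heq]
      linarith

lemma exists_maximal {S : Set (Fin 2 → ℕ)} (hS : GoodSemigroup S) {m a : ℕ}
    (hne : ∃ β ∈ S, β 1 = m)
    (hbd : ∀ β ∈ S, β 1 = m → β 0 < a) :
    ∃ γ, IsMaximalPoint S γ ∧ γ 1 = m ∧ γ 0 < a := by
  classical
  set P : ℕ → Prop := fun c => ∃ β ∈ S, β 1 = m ∧ β 0 = c with hPdef
  obtain ⟨β₀, hβ₀S, hβ₀1⟩ := hne
  have hβ₀lt := hbd β₀ hβ₀S hβ₀1
  have hPmax : P (Nat.findGreatest P a) :=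
    Nat.findGreatest_spec (le_of_lt hβ₀lt) ⟨β₀, hβ₀S, hβ₀1, rfl⟩
  obtain ⟨γ, hγS, hγ1, hγ0⟩ := hPmax
  have hbound : ∀ β ∈ S, β 1 = m → β 0 ≤ γ 0 := by
    intro β hβS hβ1
    by_contra hc
    have hlt : Nat.findGreatest P a < β 0 := by omega
    exact Nat.findGreatest_is_greatest hlt (le_of_lt (hbd β hβS hβ1)) ⟨β, hβS, hβ1, rfl⟩
  refine ⟨γ, ⟨hγS, ?_⟩, hγ1, hbd γ hγS hγ1⟩
  intro i
  rw [Set.eq_empty_iff_forall_notMem]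
  intro β hβ
  obtain ⟨hβS, hag, hgt⟩ := hβ
  fin_cases i
  · -- Delta S {0} γ = ∅ via pivotage
    have hβ0 : β 0 = γ 0 := hag 0 (Finset.mem_singleton_self 0)
    have hβ1 : γ 1 < β 1 := hgt 1 (by decide)
    obtain ⟨β'', hβ''S, hmin, heqmin, hlt0⟩ :=
      hS.2.2.2.2 γ hγS β hβS 0 hβ0.symm
    have hne1 : γ 1 ≠ β 1 := ne_of_lt hβ1
    have hβ''1 : β'' 1 = m := by
      rw [heqmin 1 hne1, min_eq_left (le_of_lt hβ1), hγ1]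
    have := hbound β'' hβ''S hβ''1
    omega
  · -- Delta S {1} γ = ∅ by maximality of γ 0
    have hβ1 : β 1 = γ 1 := hag 1 (Finset.mem_singleton_self 1)
    have hβ0 : γ 0 < β 0 := hgt 0 (by decide)
    have := hbound β hβS (by rw [hβ1, hγ1])
    omega

lemma maximal_injOn (S : Set (Fin 2 → ℕ)) (n : Fin 2 → ℕ) :
    Set.InjOn (fun γ : Fin 2 → ℕ => γ 1)
      {γ | IsMaximalPoint S γ ∧ ∀ i, γ i < n i} := by
  intro γ hγ γ' hγ' h
  have h0 : γ 0 = γ' 0 :=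
    le_antisymm (maximal_bound1 hγ'.1 γ hγ.1.1 h)
      (maximal_bound1 hγ.1 γ' hγ'.1.1 h.symm)
  funext i
  fin_cases i
  · exact h0
  · exact h

lemma bad_eq {S : Set (Fin 2 → ℕ)} (hS : GoodSemigroup S) (n : Fin 2 → ℕ) :
    Set.ncard {m | m < n 1 ∧ ∀ β ∈ S, β 1 = m → β 0 < n 0} =
      gapsBelow S 1 (n 1) + mCount S n := by
  classical
  set Mset := {γ | IsMaximalPoint S γ ∧ ∀ i, γ i < n i} with hMset
  set G := {m | m < n 1 ∧ m ∉ (fun β : Fin 2 → ℕ => β 1) '' S} with hG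
  set I := (fun γ : Fin 2 → ℕ => γ 1) '' Mset with hI
  have hGfin : G.Finite := (Set.finite_Iio (n 1)).subset (fun m hm => hm.1)
  have hIfin : I.Finite := by
    apply (Set.finite_Iio (n 1)).subset
    rintro m ⟨γ, ⟨_, hlt⟩, rfl⟩
    exact hlt 1
  have hdisj : Disjoint G I := by
    rw [Set.disjoint_left]
    rintro m ⟨_, hnot⟩ ⟨γ, ⟨hγmax, _⟩, rfl⟩
    exact hnot ⟨γ, hγmax.1, rfl⟩
  have hset : {m | m < n 1 ∧ ∀ β ∈ S, β 1 = m → β 0 < n 0} = G ∪ I := by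
    ext m
    constructor
    · rintro ⟨hm, hbd⟩
      by_cases hmem : m ∈ (fun β : Fin 2 → ℕ => β 1) '' S
      · right
        obtain ⟨β₀, hβ₀S, hβ₀1⟩ := hmem
        obtain ⟨γ, hγmax, hγ1, hγ0⟩ := exists_maximal hS ⟨β₀, hβ₀S, hβ₀1⟩ hbd
        refine ⟨γ, ⟨hγmax, ?_⟩, hγ1⟩
        intro i
        fin_cases i
        · exact hγ0
        · exact (show γ 1 < n 1 by rw [hγ1]; exact hm)
      · left; exact ⟨hm, hmem⟩
    · rintro (⟨hm, hgap⟩ | ⟨γ, ⟨hγmax, hγlt⟩, rfl⟩)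
      · exact ⟨hm, fun β hβS hβ1 => absurd ⟨β, hβS, hβ1⟩ hgap⟩
      · exact ⟨hγlt 1, fun β hβS hβ1 =>
          lt_of_le_of_lt (maximal_bound1 hγmax β hβS hβ1) (hγlt 0)⟩
  rw [hset, Set.ncard_union_eq hdisj hGfin hIfin,
    Set.ncard_image_of_injOn (maximal_injOn S n)]
  rfl

lemma ell_formula {S : Set (Fin 2 → ℕ)} (hS : GoodSemigroup S)
    {ℓ : (Fin 2 → ℕ) → ℕ} (hℓ : IsDimFun S ℓ) (n : Fin 2 → ℕ) :
    ℓ n + (gapsBelow S 0 (n 0) + gapsBelow S 1 (n 1) + mCount S n) = n 0 + n 1 := by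
  have h0 := leg0 S ℓ hℓ (n 0)
  have h1 := leg1 S ℓ hℓ (n 0) (n 1)
  rw [bad_eq hS n] at h1
  have hn' : ℓ n = ℓ (pt (n 0) (n 1)) := by rw [← eq_pt n]
  omega


lemma eJ_empty : eJ (∅ : Finset (Fin 2)) = 0 := by
  funext i; simp [eJ]

lemma eJ_zero : eJ ({0} : Finset (Fin 2)) = Pi.single 0 1 := by
  funext i; fin_cases i <;> simp [eJ, Pi.single_apply]

lemma eJ_one : eJ ({1} : Finset (Fin 2)) = Pi.single 1 1 := by
  funext i; fin_cases i <;> simp [eJ, Pi.single_apply]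

lemma eJ_univ01 (n : Fin 2 → ℕ) :
    n + eJ (univ : Finset (Fin 2)) = (n + Pi.single 0 1) + Pi.single 1 1 := by
  funext i; fin_cases i <;> simp [eJ, Pi.single_apply]

lemma eJ_univ10 (n : Fin 2 → ℕ) :
    n + eJ (univ : Finset (Fin 2)) = (n + Pi.single 1 1) + Pi.single 0 1 := by
  funext i; fin_cases i <;> simp [eJ, Pi.single_apply]

lemma add_single_apply0 (n : Fin 2 → ℕ) :
    (n + Pi.single 0 1 : Fin 2 → ℕ) 0 = n 0 + 1 ∧
      (n + Pi.single 0 1 : Fin 2 → ℕ) 1 = n 1 := by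
  constructor <;> simp [Pi.single_apply]

lemma add_single_apply1 (n : Fin 2 → ℕ) :
    (n + Pi.single 1 1 : Fin 2 → ℕ) 0 = n 0 ∧
      (n + Pi.single 1 1 : Fin 2 → ℕ) 1 = n 1 + 1 := by
  constructor <;> simp [Pi.single_apply]

lemma ell_step0 {S : Set (Fin 2 → ℕ)} {ℓ : (Fin 2 → ℕ) → ℕ} (hℓ : IsDimFun S ℓ)
    (n : Fin 2 → ℕ) (hn : n ∈ S) : ℓ (n + Pi.single 0 1) = ℓ n + 1 :=
  (hℓ.2 n 0).1 ⟨n, hn, rfl, fun _ _ => le_refl _⟩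

lemma ell_step1 {S : Set (Fin 2 → ℕ)} {ℓ : (Fin 2 → ℕ) → ℕ} (hℓ : IsDimFun S ℓ)
    (n : Fin 2 → ℕ) (hn : n ∈ S) : ℓ (n + Pi.single 1 1) = ℓ n + 1 :=
  (hℓ.2 n 1).1 ⟨n, hn, rfl, fun _ _ => le_refl _⟩

lemma ell_univ_max {S : Set (Fin 2 → ℕ)} {ℓ : (Fin 2 → ℕ) → ℕ} (hℓ : IsDimFun S ℓ)
    (n : Fin 2 → ℕ) (hmax : IsMaximalPoint S n) :
    ℓ (n + eJ (univ : Finset (Fin 2))) = ℓ n + 1 := by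
  rw [eJ_univ01]
  have hnc : ¬ ∃ β ∈ S, β 1 = (n + Pi.single 0 1 : Fin 2 → ℕ) 1 ∧
      ∀ j, j ≠ 1 → (n + Pi.single 0 1 : Fin 2 → ℕ) j ≤ β j := by
    rintro ⟨β, hβS, hβ1, hβge⟩
    have h0 : n 0 < β 0 := by
      have h := hβge 0 (by decide)
      rw [(add_single_apply0 n).1] at h
      omega
    have hβ1' : β 1 = n 1 := by rw [hβ1, (add_single_apply0 n).2]
    have hmem := mem_Delta1 S n β hβS hβ1' h0
    rw [hmax.2 1] at hmem
    exact hmem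
  rw [(hℓ.2 (n + Pi.single 0 1) 1).2 hnc, ell_step0 hℓ n hmax.1]

lemma ell_univ_nonmax {S : Set (Fin 2 → ℕ)} {ℓ : (Fin 2 → ℕ) → ℕ}
    (hℓ : IsDimFun S ℓ) (n : Fin 2 → ℕ) (hn : n ∈ S)
    (hnm : ¬ IsMaximalPoint S n) :
    ℓ (n + eJ (univ : Finset (Fin 2))) = ℓ n + 2 := by
  have hex : ∃ i, Delta S {i} n ≠ ∅ := by
    by_contra h
    push_neg at h
    exact hnm ⟨hn, h⟩
  obtain ⟨i, hi⟩ := hex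
  obtain ⟨β, hβS, hag, hgt⟩ := Set.nonempty_iff_ne_empty.mpr hi
  fin_cases i
  · -- β 0 = n 0, n 1 < β 1 : go up then right
    have hβ0 : β 0 = n 0 := hag 0 (Finset.mem_singleton_self 0)
    have hβ1 : n 1 < β 1 := hgt 1 (by decide)
    rw [eJ_univ10]
    have hcond : ∃ β' ∈ S, β' 0 = (n + Pi.single 1 1 : Fin 2 → ℕ) 0 ∧
        ∀ j, j ≠ 0 → (n + Pi.single 1 1 : Fin 2 → ℕ) j ≤ β' j := by
      refine ⟨β, hβS, by rw [(add_single_apply1 n).1, hβ0], ?_⟩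
      intro j hj
      fin_cases j
      · exact absurd rfl hj
      · show (n + Pi.single 1 1 : Fin 2 → ℕ) 1 ≤ β 1
        rw [(add_single_apply1 n).2]; omega
    rw [(hℓ.2 (n + Pi.single 1 1) 0).1 hcond, ell_step1 hℓ n hn]
  · -- β 1 = n 1, n 0 < β 0 : go right then up
    have hβ1 : β 1 = n 1 := hag 1 (Finset.mem_singleton_self 1)
    have hβ0 : n 0 < β 0 := hgt 0 (by decide)
    rw [eJ_univ01]
    have hcond : ∃ β' ∈ S, β' 1 = (n + Pi.single 0 1 : Fin 2 → ℕ) 1 ∧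
        ∀ j, j ≠ 1 → (n + Pi.single 0 1 : Fin 2 → ℕ) j ≤ β' j := by
      refine ⟨β, hβS, by rw [(add_single_apply0 n).2, hβ1], ?_⟩
      intro j hj
      fin_cases j
      · show (n + Pi.single 0 1 : Fin 2 → ℕ) 0 ≤ β 0
        rw [(add_single_apply0 n).1]; omega
      · exact absurd rfl hj
    rw [(hℓ.2 (n + Pi.single 0 1) 1).1 hcond, ell_step0 hℓ n hn]

lemma univ_finset_fin2 :
    (univ : Finset (Finset (Fin 2))) =
      {∅, {0}, {1}, (univ : Finset (Fin 2))} := by decide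

end EpsAux

open EpsAux

/-- The two-branch case: exact values of ε_{(n₁,n₂)}. -/
theorem eps_two_branches (S : Set (Fin 2 → ℕ)) (hS : GoodSemigroup S)
    (ℓ : (Fin 2 → ℕ) → ℕ) (hℓ : IsDimFun S ℓ) (q : ℕ) (hq : 2 ≤ q)
    (n : Fin 2 → ℕ) (hn : n ∈ S) :
    (IsMaximalPoint S n →
      eps q ℓ n = (q : ℚ) ^ (gapsBelow S 0 (n 0) + gapsBelow S 1 (n 1) + mCount S n)) ∧
    (¬ IsMaximalPoint S n →
      eps q ℓ n = (q : ℚ) ^ (gapsBelow S 0 (n 0) + gapsBelow S 1 (n 1) + mCount S n) *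
        (((q : ℚ) - 1) / (q : ℚ))) := by
  classical
  have hq0 : (q:ℚ) ≠ 0 := Nat.cast_ne_zero.mpr (by omega)
  have hq2 : (2:ℚ) ≤ (q:ℚ) := by exact_mod_cast hq
  have hq1 : (q:ℚ) - 1 ≠ 0 := by linarith
  have hLs := ell_formula hS hℓ n
  set s := gapsBelow S 0 (n 0) + gapsBelow S 1 (n 1) + mCount S n with hsdef
  have hsum_n : (∑ i, (n i : ℤ)) = (n 0 : ℤ) + (n 1 : ℤ) := by
    simp [Fin.sum_univ_two]
  have hA : ℓ (n + eJ (∅ : Finset (Fin 2))) = ℓ n := by rw [eJ_empty, add_zero]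
  have hB : ℓ (n + eJ ({0} : Finset (Fin 2))) = ℓ n + 1 := by
    rw [eJ_zero]; exact ell_step0 hℓ n hn
  have hC : ℓ (n + eJ ({1} : Finset (Fin 2))) = ℓ n + 1 := by
    rw [eJ_one]; exact ell_step1 hℓ n hn
  have e1 : ((n 0 : ℤ) + (n 1 : ℤ)) - (ℓ (n + eJ (∅ : Finset (Fin 2))) : ℤ)
      = (s : ℤ) := by rw [hA]; omega
  have e2 : ((n 0 : ℤ) + (n 1 : ℤ)) - (ℓ (n + eJ ({0} : Finset (Fin 2))) : ℤ)
      = (s : ℤ) - 1 := by rw [hB]; push_cast; omega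
  have e3 : ((n 0 : ℤ) + (n 1 : ℤ)) - (ℓ (n + eJ ({1} : Finset (Fin 2))) : ℤ)
      = (s : ℤ) - 1 := by rw [hC]; push_cast; omega
  have hzs : (q:ℚ) ^ ((s:ℤ) - 1) = (q:ℚ) ^ (s:ℤ) * (q:ℚ)⁻¹ := by
    rw [zpow_sub₀ hq0, zpow_one, div_eq_mul_inv]
  constructor
  · intro hmax
    have hD := ell_univ_max hℓ n hmax
    have e4 : ((n 0 : ℤ) + (n 1 : ℤ)) - (ℓ (n + eJ (univ : Finset (Fin 2))) : ℤ)
        = (s : ℤ) - 1 := by rw [hD]; push_cast; omega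
    unfold eps
    rw [univ_finset_fin2, Finset.sum_insert (by decide), Finset.sum_insert (by decide),
      Finset.sum_insert (by decide), Finset.sum_singleton, hsum_n, e1, e2, e3, e4,
      ← zpow_natCast (q:ℚ) s]
    simp only [Finset.card_empty, Finset.card_singleton, Finset.card_univ,
      Fintype.card_fin, pow_zero, pow_one, hzs]
    field_simp
    ring
  · intro hnm
    have hD := ell_univ_nonmax hℓ n hn hnm
    have e4 : ((n 0 : ℤ) + (n 1 : ℤ)) - (ℓ (n + eJ (univ : Finset (Fin 2))) : ℤ)
        = (s : ℤ) - 1 - 1 := by rw [hD]; push_cast; omega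
    have hzs2 : (q:ℚ) ^ ((s:ℤ) - 1 - 1) = (q:ℚ) ^ (s:ℤ) * (q:ℚ)⁻¹ * (q:ℚ)⁻¹ := by
      rw [zpow_sub₀ hq0, zpow_one, hzs, div_eq_mul_inv]
    unfold eps
    rw [univ_finset_fin2, Finset.sum_insert (by decide), Finset.sum_insert (by decide),
      Finset.sum_insert (by decide), Finset.sum_singleton, hsum_n, e1, e2, e3, e4,
      ← zpow_natCast (q:ℚ) s]
    simp only [Finset.card_empty, Finset.card_singleton, Finset.card_univ,
      Fintype.card_fin, pow_zero, pow_one, hzs, hzs2]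
    field_simp
    ring
end
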